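/- (Corollary 6) For all positive integers m, n, and r, the identity \(\sum_{a=1}^{m-r}\sum_{b=1}^{n-r}\binom{m+n-a+b-1}{m-r-a}\binom{m+n+a-b-1}{n-r-b}=\frac{mn}{2(m+n)}\binom{m+n}{m}^2-\frac{r}{2}\binom{2m+2n}{2m}+\frac{r}{2}\binom{m+n}{m}^2+\sum_{k=1}^{r-1}(r-k)\binom{m+n}{m-k}\binom{m+n}{n-k}\) holds (as an identity of rational numbers), where sums over empty ranges are 0 and a binomial coefficient with negative lower index is 0. -/

import Mathlib

/-- Binomial coefficient with natural upper index and integer lower index,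
equal to `0` when the lower index is negative. -/
def chooseZ (N : ℕ) (k : ℤ) : ℕ :=
  if k < 0 then 0 else N.choose k.toNat

open Finset

lemma chooseZ_neg {N : ℕ} {k : ℤ} (h : k < 0) : chooseZ N k = 0 := by
  simp [chooseZ, h]

lemma chooseZ_coe (N j : ℕ) : chooseZ N (j : ℤ) = N.choose j := by
  simp [chooseZ]

lemma chooseZ_of_gt {N : ℕ} {k : ℤ} (h : (N : ℤ) < k) : chooseZ N k = 0 := by
  rcases lt_or_ge k 0 with hk | hk
  · exact chooseZ_neg hk
  · obtain ⟨j, rfl⟩ := Int.eq_ofNat_of_zero_le hk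
    rw [chooseZ_coe]
    exact Nat.choose_eq_zero_of_lt (by exact_mod_cast h)

lemma chooseZ_succ (N : ℕ) (k : ℤ) : chooseZ (N + 1) k = chooseZ N k + chooseZ N (k - 1) := by
  rcases lt_or_ge k 0 with hk | hk
  · rw [chooseZ_neg hk, chooseZ_neg hk, chooseZ_neg (by omega)]
  · obtain ⟨j, rfl⟩ := Int.eq_ofNat_of_zero_le hk
    cases j with
    | zero => simp [chooseZ]
    | succ i =>
      rw [chooseZ_coe, chooseZ_coe, show ((i + 1 : ℕ) : ℤ) - 1 = (i : ℤ) by push_cast; ring,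
        chooseZ_coe, Nat.choose_succ_succ']
      exact Nat.add_comm _ _

lemma chooseZ_symm (N : ℕ) (k : ℤ) : chooseZ N k = chooseZ N ((N : ℤ) - k) := by
  rcases lt_or_ge k 0 with hk | hk
  · rw [chooseZ_neg hk, chooseZ_of_gt (by omega)]
  · obtain ⟨j, rfl⟩ := Int.eq_ofNat_of_zero_le hk
    rcases le_or_gt (j : ℤ) N with hj | hj
    · have hj' : j ≤ N := by exact_mod_cast hj
      rw [chooseZ_coe, show (N : ℤ) - (j : ℤ) = ((N - j : ℕ) : ℤ) by omega, chooseZ_coe,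
        Nat.choose_symm hj']
    · rw [chooseZ_of_gt hj, chooseZ_neg (by omega)]

lemma chooseZ_absorb (N : ℕ) (k : ℤ) :
    (k : ℚ) * chooseZ (N + 1) k = ((N : ℚ) + 1) * chooseZ N (k - 1) := by
  rcases lt_or_ge k 0 with hk | hk
  · rw [chooseZ_neg hk, chooseZ_neg (by omega)]; simp
  · obtain ⟨j, rfl⟩ := Int.eq_ofNat_of_zero_le hk
    cases j with
    | zero => simp [chooseZ]
    | succ i =>
      rw [chooseZ_coe, show ((i + 1 : ℕ) : ℤ) - 1 = (i : ℤ) by push_cast; ring, chooseZ_coe]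
      have := Nat.add_one_mul_choose_eq N i
      have h2 : ((N + 1) * N.choose i : ℚ) = ((N + 1).choose (i + 1) * (i + 1) : ℕ) := by
        exact_mod_cast congrArg (Nat.cast : ℕ → ℚ) this
      push_cast at h2 ⊢
      linarith [h2]

-- sum over Icc a+1 .. a+N as range
lemma sum_Icc_shift (a : ℤ) (N : ℕ) (f : ℤ → ℚ) :
    ∑ k ∈ Icc (a + 1) (a + N), f k = ∑ i ∈ range N, f (a + 1 + i) := by
  induction N with
  | zero => simp
  | succ M ih =>
    have h : Icc (a + 1) (a + (M + 1 : ℕ)) = insert (a + (M + 1 : ℕ)) (Icc (a + 1) (a + M)) := by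
      ext x
      simp only [mem_Icc, mem_insert]
      push_cast
      omega
    rw [h, Finset.sum_insert (by simp only [mem_Icc]; push_cast; omega), ih,
      Finset.sum_range_succ]
    push_cast
    ring_nf

-- the telescoping Pascal identity
lemma pascal_combo (q : ℕ) (M k : ℤ) :
    (chooseZ q (M + k - 1) : ℚ) * chooseZ (q + 1) (M - k)
      - (chooseZ q (M - k - 1) : ℚ) * chooseZ (q + 1) (M + k)
    = (chooseZ q (M + k - 1) : ℚ) * chooseZ q (M - k)
      - (chooseZ q (M + k) : ℚ) * chooseZ q (M - k - 1) := by
  rw [chooseZ_succ q (M - k), chooseZ_succ q (M + k)]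
  push_cast
  ring

-- 2k * A_k in terms of the telescoping difference
lemma absorb_combo (q : ℕ) (M k : ℤ) :
    2 * (k : ℚ) * ((chooseZ (q + 1) (M - k) : ℚ) * chooseZ (q + 1) (M + k))
    = ((q : ℚ) + 1) * ((chooseZ q (M + k - 1) : ℚ) * chooseZ (q + 1) (M - k)
        - (chooseZ q (M - k - 1) : ℚ) * chooseZ (q + 1) (M + k)) := by
  have h1 := chooseZ_absorb q (M + k)
  have h2 := chooseZ_absorb q (M - k)
  have e1 : M + k - 1 = M + k - 1 := rfl
  push_cast at h1 h2 ⊢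
  nlinarith [h1, h2]

-- the upper-index Vandermonde convolution
lemma conv_range (u : ℕ) : ∀ (M v : ℕ),
    ∑ j ∈ range (M + 1), (j.choose u * (M - j).choose v) = (M + 1).choose (u + v + 1) := by
  intro M
  induction M with
  | zero =>
    intro v
    cases u <;> cases v <;> simp [Nat.choose_eq_zero_of_lt, Nat.choose]
  | succ M ih =>
    intro v
    rw [Finset.sum_range_succ]
    cases v with
    | zero =>
      have : ∀ j ∈ range (M + 1), j.choose u * (M + 1 - j).choose 0 = j.choose u * (M - j).choose 0 := by
        intro j hj; simp
      rw [Finset.sum_congr rfl this, ih 0, Nat.sub_self]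
      simp only [Nat.choose_zero_right, Nat.mul_one, Nat.add_zero]
      rw [Nat.choose_succ_succ (M + 1) u]
      simp only [Nat.succ_eq_add_one]
      omega
    | succ w =>
      have : ∀ j ∈ range (M + 1), j.choose u * (M + 1 - j).choose (w + 1)
          = j.choose u * (M - j).choose (w + 1) + j.choose u * (M - j).choose w := by
        intro j hj
        simp only [mem_range] at hj
        rw [show M + 1 - j = (M - j) + 1 by omega, Nat.choose_succ_succ', Nat.mul_add]
        omega
      rw [Finset.sum_congr rfl this, Finset.sum_add_distrib, ih (w + 1), ih w]
      rw [Nat.sub_self]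
      rw [show u + (w+1) + 1 = (u + w + 1) + 1 by omega, Nat.choose_succ_succ (M + 1) (u + w + 1)]
      simp [Nat.choose_eq_zero_of_lt]
      omega

def AQ (m n : ℕ) (k : ℤ) : ℚ :=
  (chooseZ (m + n) ((m : ℤ) - k) : ℚ) * chooseZ (m + n) ((n : ℤ) - k)

lemma AQ_eq (m n : ℕ) (k : ℤ) :
    AQ m n k = (chooseZ (m + n) ((m : ℤ) - k) : ℚ) * chooseZ (m + n) ((m : ℤ) + k) := by
  unfold AQ
  congr 2
  rw [chooseZ_symm (m + n) ((m : ℤ) + k)]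
  congr 1
  push_cast
  ring

lemma AQ_zero {m n : ℕ} {k : ℤ} (h : (m : ℤ) < k ∨ (n : ℤ) < k) : AQ m n k = 0 := by
  unfold AQ
  rcases h with h | h
  · rw [chooseZ_neg (by omega)]; push_cast; ring
  · rw [chooseZ_neg (show (n : ℤ) - k < 0 by omega)]; push_cast; ring

lemma sum_Icc_eq_range (a b : ℤ) (N : ℕ) (f : ℤ → ℚ) (h : b + 1 = a + N) :
    ∑ k ∈ Icc a b, f k = ∑ i ∈ range N, f (a + i) := by
  have h1 := sum_Icc_shift (a - 1) N f
  rw [show a - 1 + 1 = a by ring, show a - 1 + (N : ℤ) = b by omega] at h1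
  rw [h1]

lemma F2 (m n : ℕ) (hm : 0 < m) (hn : 0 < n) :
    ∑ k ∈ Icc (1 : ℤ) ((m : ℤ) + (n : ℤ)), (k : ℚ) * AQ m n k
      = (m * n : ℚ) / (2 * (m + n)) * (Nat.choose (m + n) m : ℚ) ^ 2 := by
  obtain ⟨q, hq⟩ : ∃ q, m + n = q + 1 := ⟨m + n - 1, by omega⟩
  set C : ℚ := (Nat.choose (m + n) m : ℚ) with hC
  set g : ℕ → ℚ := fun i => (chooseZ q ((m : ℤ) + (1 + i) - 1) : ℚ) * chooseZ q ((m : ℤ) - (1 + i))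
    with hg
  have step : ∀ i ∈ range (m + n), 2 * ((1 + (i : ℤ) : ℤ) : ℚ) * AQ m n (1 + i)
      = ((q : ℚ) + 1) * (g i - g (i + 1)) := by
    intro i _
    rw [AQ_eq, hq]
    have h := absorb_combo q (m : ℤ) (1 + (i : ℤ))
    rw [pascal_combo] at h
    rw [h, hg]
    simp only []
    rw [show (m : ℤ) + (1 + ((i + 1 : ℕ) : ℤ)) - 1 = (m : ℤ) + (1 + (i : ℤ)) by push_cast; ring,
      show (m : ℤ) - (1 + ((i + 1 : ℕ) : ℤ)) = (m : ℤ) - (1 + (i : ℤ)) - 1 by push_cast; ring]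
  have key : ∑ k ∈ Icc (1 : ℤ) ((m : ℤ) + (n : ℤ)), (2 * (k : ℚ) * AQ m n k)
      = ((q : ℚ) + 1) * ((chooseZ q (m : ℤ) : ℚ) * chooseZ q ((m : ℤ) - 1)) := by
    calc ∑ k ∈ Icc (1 : ℤ) ((m : ℤ) + (n : ℤ)), (2 * (k : ℚ) * AQ m n k)
        = ∑ i ∈ range (m + n), (2 * ((1 + (i : ℤ) : ℤ) : ℚ) * AQ m n (1 + i)) := by
          rw [sum_Icc_eq_range 1 ((m : ℤ) + (n : ℤ)) (m + n) _ (by push_cast; ring)]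
      _ = ∑ i ∈ range (m + n), ((q : ℚ) + 1) * (g i - g (i + 1)) := Finset.sum_congr rfl step
      _ = ((q : ℚ) + 1) * (g 0 - g (m + n)) := by
          rw [← Finset.mul_sum, Finset.sum_range_sub' g]
      _ = ((q : ℚ) + 1) * ((chooseZ q (m : ℤ) : ℚ) * chooseZ q ((m : ℤ) - 1)) := by
          have hg0 : g 0 = (chooseZ q (m : ℤ) : ℚ) * chooseZ q ((m : ℤ) - 1) := by
            rw [hg]; norm_num
          have hgN : g (m + n) = 0 := by
            rw [hg]
            simp only []
            rw [chooseZ_neg (show (m : ℤ) - (1 + ((m + n : ℕ) : ℤ)) < 0 by push_cast; omega)]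
            push_cast
            ring
          rw [hg0, hgN, sub_zero]
  rw [← Finset.sum_congr rfl (fun k _ => by ring :
    ∀ k ∈ Icc (1 : ℤ) ((m : ℤ) + (n : ℤ)), (2 : ℚ) * ((k : ℚ) * AQ m n k) = 2 * (k : ℚ) * AQ m n k),
    ← Finset.mul_sum] at key
  have h_m : (m : ℚ) * C = ((q : ℚ) + 1) * chooseZ q ((m : ℤ) - 1) := by
    have := chooseZ_absorb q (m : ℤ)
    rw [← hq, chooseZ_coe] at this
    rw [hC]
    exact this
  have h_n : (n : ℚ) * C = ((q : ℚ) + 1) * chooseZ q (m : ℤ) := by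
    have := chooseZ_absorb q (n : ℤ)
    rw [← hq, chooseZ_coe] at this
    have hsymm : Nat.choose (m + n) n = Nat.choose (m + n) m := by
      have h1 := Nat.choose_symm (Nat.le_add_right m n)
      rw [show m + n - m = n by omega] at h1
      exact h1
    rw [hsymm] at this
    have h2 : chooseZ q ((n : ℤ) - 1) = chooseZ q (m : ℤ) := by
      rw [chooseZ_symm q ((n : ℤ) - 1)]
      congr 1
      omega
    rw [h2] at this
    rw [hC]
    exact this
  have hmn : ((m : ℚ) + (n : ℚ)) = (q : ℚ) + 1 := by exact_mod_cast hq
  have hmn0 : (2 : ℚ) * ((m : ℚ) + n) ≠ 0 := by rw [hmn]; positivity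
  rw [div_mul_eq_mul_div, eq_div_iff hmn0]
  linear_combination ((q : ℚ) + 1) * key
    + 2 * (∑ k ∈ Icc (1 : ℤ) ((m : ℤ) + (n : ℤ)), (k : ℚ) * AQ m n k) * hmn
    - (n : ℚ) * C * h_m
    - (((q : ℚ) + 1) * (chooseZ q ((m : ℤ) - 1) : ℚ)) * h_n

lemma F1 (m n : ℕ) :
    (Nat.choose (2 * (m + n)) (2 * m) : ℚ)
      = (Nat.choose (m + n) m : ℚ) ^ 2 + 2 * ∑ k ∈ Icc (1 : ℤ) ((m : ℤ) + (n : ℤ)), AQ m n k := by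
  set F : ℕ → ℕ := fun k => (m + n).choose k * (m + n).choose (2 * m - k) with hF
  have hv : (2 * (m + n)).choose (2 * m) = ∑ k ∈ range (2 * m + 1), F k := by
    have h := Nat.add_choose_eq (m + n) (m + n) (2 * m)
    rw [Finset.Nat.sum_antidiagonal_eq_sum_range_succ_mk] at h
    rw [show (m + n) + (m + n) = 2 * (m + n) by ring] at h
    exact h
  have hsplit : ∑ k ∈ range (2 * m + 1), F k
      = F m + 2 * ∑ j ∈ range m, F (m + 1 + j) := by
    rw [show 2 * m + 1 = (m + 1) + m by ring, Finset.sum_range_add, Finset.sum_range_succ]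
    have hrefl : ∑ j ∈ range m, F j = ∑ j ∈ range m, F (m + 1 + j) := by
      rw [← Finset.sum_range_reflect F m]
      refine Finset.sum_congr rfl ?_
      intro j hj
      simp only [mem_range] at hj
      rw [hF]
      simp only []
      rw [show 2 * m - (m - 1 - j) = m + 1 + j by omega,
        show 2 * m - (m + 1 + j) = m - 1 - j by omega, Nat.mul_comm]
    rw [hrefl]
    ring
  have hsum : ∑ k ∈ Icc (1 : ℤ) ((m : ℤ) + (n : ℤ)), AQ m n k
      = ∑ j ∈ range m, (F (m + 1 + j) : ℚ) := by
    rw [sum_Icc_eq_range 1 ((m : ℤ) + (n : ℤ)) (m + n) _ (by push_cast; ring)]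
    rw [← Finset.sum_subset (Finset.range_subset_range.2 (Nat.le_add_right m n))
      (fun i _ hi => AQ_zero (Or.inl (by simp only [mem_range] at hi; push_cast; omega)))]
    refine Finset.sum_congr rfl ?_
    intro i hi
    simp only [mem_range] at hi
    rw [AQ_eq, hF]
    simp only []
    rw [show (m : ℤ) - (1 + (i : ℤ)) = ((m - 1 - i : ℕ) : ℤ) by push_cast; omega,
      show (m : ℤ) + (1 + (i : ℤ)) = ((m + 1 + i : ℕ) : ℤ) by push_cast; omega,
      chooseZ_coe, chooseZ_coe, show 2 * m - (m + 1 + i) = m - 1 - i by omega]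
    push_cast
    ring
  have hFm : F m = (m + n).choose m * (m + n).choose m := by
    rw [hF]
    simp only []
    rw [show 2 * m - m = m by omega]
  rw [hsum]
  have : ((2 * (m + n)).choose (2 * m) : ℚ) = ((F m + 2 * ∑ j ∈ range m, F (m + 1 + j) : ℕ) : ℚ) := by
    exact_mod_cast congrArg (Nat.cast : ℕ → ℚ) (hv.trans hsplit)
  rw [this, hFm]
  push_cast
  ring

lemma sum_Icc_one_nat {β : Type*} [AddCommMonoid β] (N : ℕ) (f : ℕ → β) :
    ∑ b ∈ Icc 1 N, f b = ∑ j ∈ range N, f (1 + j) := by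
  rw [← Finset.Ico_add_one_right_eq_Icc, Finset.sum_Ico_eq_sum_range]
  rw [show N + 1 - 1 = N by omega]

lemma conv_Icc (P u v : ℕ) :
    ∑ b ∈ Icc 1 P, ((b - 1).choose u * (P - b).choose v) = P.choose (u + v + 1) := by
  cases P with
  | zero => simp [Nat.choose_eq_zero_of_lt]
  | succ Q =>
    rw [sum_Icc_one_nat]
    rw [show Q + 1 = Q + 1 from rfl]
    have : ∀ j ∈ range (Q + 1), (1 + j - 1).choose u * (Q + 1 - (1 + j)).choose v
        = j.choose u * (Q - j).choose v := by
      intro j hj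
      rw [show 1 + j - 1 = j by omega, show Q + 1 - (1 + j) = Q - j by omega]
    rw [Finset.sum_congr rfl this, conv_range u Q v]

lemma L_s1 (m n r : ℕ) (hrm : r < m) (hrn : r < n) :
    ((∑ b ∈ Icc 1 (n - r),
        (m + n - 1 + b - 1).choose (m - r - 1) * (m + n + 1 - b - 1).choose (n - r - b) : ℕ) : ℚ)
      = ∑ k ∈ Icc ((r : ℤ) + 1) ((m : ℤ) + (n : ℤ)),
          (chooseZ (m + n - 1) ((m : ℤ) - k) : ℚ) * chooseZ (m + n) ((m : ℤ) + k) := by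
  set q := m + n - 1 with hq
  -- Step A: rewrite and extend the ℕ sum
  have hA : ∑ b ∈ Icc 1 (n - r),
        (m + n - 1 + b - 1).choose (m - r - 1) * (m + n + 1 - b - 1).choose (n - r - b)
      = ∑ b ∈ Icc 1 (m + n), (m + n - 1 + b - 1).choose (m - r - 1) * (m + n - b).choose (m + r) := by
    rw [← Finset.sum_subset (show Icc 1 (n - r) ⊆ Icc 1 (m + n) by
        apply Finset.Icc_subset_Icc_right; omega)]
    · refine Finset.sum_congr rfl ?_
      intro b hb
      simp only [mem_Icc] at hb
      congr 1
      rw [show m + n + 1 - b - 1 = m + n - b by omega]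
      rw [show n - r - b = (m + n - b) - (m + r) by omega]
      exact Nat.choose_symm (by omega)
    · intro b hb hb'
      simp only [mem_Icc] at hb hb'
      rw [Nat.choose_eq_zero_of_lt (show m + n - b < m + r by omega), Nat.mul_zero]
  -- Step B: Vandermonde + convolution
  have hB : ∑ b ∈ Icc 1 (m + n),
        (m + n - 1 + b - 1).choose (m - r - 1) * (m + n - b).choose (m + r)
      = ∑ i ∈ range (m - r), q.choose i * (m + n).choose (2 * m - i) := by
    have hexp : ∀ b ∈ Icc 1 (m + n),
        (m + n - 1 + b - 1).choose (m - r - 1) * (m + n - b).choose (m + r)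
        = ∑ i ∈ range (m - r), q.choose i * ((b - 1).choose (m - r - 1 - i) * (m + n - b).choose (m + r)) := by
      intro b hb
      simp only [mem_Icc] at hb
      have h1 : m + n - 1 + b - 1 = q + (b - 1) := by omega
      rw [h1, Nat.add_choose_eq, Finset.Nat.sum_antidiagonal_eq_sum_range_succ_mk,
        show (m - r - 1).succ = m - r by omega, Finset.sum_mul]
      refine Finset.sum_congr rfl ?_
      intro i hi
      ring
    rw [Finset.sum_congr rfl hexp, Finset.sum_comm]
    refine Finset.sum_congr rfl ?_
    intro i hi
    simp only [mem_range] at hi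
    rw [← Finset.mul_sum, conv_Icc (m + n) (m - r - 1 - i) (m + r),
      show m - r - 1 - i + (m + r) + 1 = 2 * m - i by omega]
  -- Step C: reflect
  have hC : ∑ i ∈ range (m - r), q.choose i * (m + n).choose (2 * m - i)
      = ∑ j ∈ range (m - r), q.choose (m - r - 1 - j) * (m + n).choose (m + r + 1 + j) := by
    rw [← Finset.sum_range_reflect (fun i => q.choose i * (m + n).choose (2 * m - i)) (m - r)]
    refine Finset.sum_congr rfl ?_
    intro j hj
    simp only [mem_range] at hj
    rw [show 2 * m - (m - r - 1 - j) = m + r + 1 + j by omega]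
  -- Step D: the ℤ-indexed right side
  have hD : ∑ k ∈ Icc ((r : ℤ) + 1) ((m : ℤ) + (n : ℤ)),
        (chooseZ q ((m : ℤ) - k) : ℚ) * chooseZ (m + n) ((m : ℤ) + k)
      = ∑ j ∈ range (m - r), ((q.choose (m - r - 1 - j) * (m + n).choose (m + r + 1 + j) : ℕ) : ℚ) := by
    rw [sum_Icc_eq_range ((r : ℤ) + 1) ((m : ℤ) + (n : ℤ)) (m + n - r) _ (by push_cast; omega)]
    rw [← Finset.sum_subset (Finset.range_subset_range.2 (show m - r ≤ m + n - r by omega))]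
    · refine Finset.sum_congr rfl ?_
      intro j hj
      simp only [mem_range] at hj
      rw [show (m : ℤ) - ((r : ℤ) + 1 + (j : ℤ)) = ((m - r - 1 - j : ℕ) : ℤ) by push_cast; omega,
        show (m : ℤ) + ((r : ℤ) + 1 + (j : ℤ)) = ((m + r + 1 + j : ℕ) : ℤ) by push_cast; omega,
        chooseZ_coe, chooseZ_coe]
      push_cast
      ring
    · intro j hj hj'
      simp only [mem_range] at hj hj'
      rw [chooseZ_neg (show (m : ℤ) - ((r : ℤ) + 1 + (j : ℤ)) < 0 by push_cast; omega)]
      push_cast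
      ring
  rw [hA, hB, hC, hD]
  push_cast
  ring

lemma term_combo (q : ℕ) (M k : ℤ) :
    (chooseZ q (M - k) : ℚ) * chooseZ (q + 1) (M + k)
      + (chooseZ q (M + k - 1) : ℚ) * chooseZ (q + 1) (M - k)
    = (chooseZ (q + 1) (M - k) : ℚ) * chooseZ (q + 1) (M + k)
      + ((chooseZ q (M + k - 1) : ℚ) * chooseZ q (M - k)
          - (chooseZ q (M + k) : ℚ) * chooseZ q (M - k - 1)) := by
  rw [chooseZ_succ q (M - k), chooseZ_succ q (M + k)]
  push_cast
  ring

lemma sum_tele (s : ℤ) (N : ℕ) (g : ℤ → ℚ) :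
    ∑ k ∈ Icc (s + 1) (s + N), (g k - g (k + 1)) = g (s + 1) - g (s + (N : ℤ) + 1) := by
  rw [sum_Icc_shift s N (fun k => g k - g (k + 1))]
  have : ∀ i ∈ range N, (fun k : ℤ => g k - g (k + 1)) (s + 1 + i)
      = (fun i : ℕ => g (s + 1 + i)) i - (fun i : ℕ => g (s + 1 + i)) (i + 1) := by
    intro i _
    simp only []
    congr 2
    push_cast
    ring
  rw [Finset.sum_congr rfl this, Finset.sum_range_sub' (fun i : ℕ => g (s + 1 + i)) N]
  rw [show s + 1 + ((0 : ℕ) : ℤ) = s + 1 by push_cast; ring,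
    show s + 1 + ((N : ℕ) : ℤ) = s + (N : ℤ) + 1 by push_cast; ring]

lemma Icc_one_split {β : Type*} [AddCommMonoid β] (N : ℕ) (hN : 1 ≤ N) (f : ℕ → β) :
    ∑ b ∈ Icc 1 N, f b = f 1 + ∑ b ∈ Icc 2 N, f b := by
  rw [show Icc 1 N = insert 1 (Icc 2 N) by
      ext x; simp only [mem_Icc, mem_insert]; omega,
    Finset.sum_insert (by simp)]

lemma Icc_two_shift {β : Type*} [AddCommMonoid β] (N : ℕ) (f : ℕ → β) :
    ∑ b ∈ Icc 2 (N + 1), f b = ∑ b ∈ Icc 1 N, f (b + 1) := by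
  rw [show (2 : ℕ) = 1 + 1 by rfl, ← Finset.map_add_right_Icc 1 N 1, Finset.sum_map]
  rfl

lemma Icc_two_shift' {β : Type*} [AddCommMonoid β] (N M : ℕ) (h : M + 1 = N) (f : ℕ → β) :
    ∑ b ∈ Icc 2 N, f b = ∑ b ∈ Icc 1 M, f (b + 1) := by
  subst h
  exact Icc_two_shift M f

lemma L_LHS_step (m n r : ℕ) (hrm : r < m) (hrn : r < n) :
    ∑ a ∈ Icc 1 (m - r), ∑ b ∈ Icc 1 (n - r),
      ((Nat.choose (m + n - a + b - 1) (m - r - a) : ℚ) *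
        (Nat.choose (m + n + a - b - 1) (n - r - b) : ℚ))
    = (∑ a ∈ Icc 1 (m - (r + 1)), ∑ b ∈ Icc 1 (n - (r + 1)),
        ((Nat.choose (m + n - a + b - 1) (m - (r + 1) - a) : ℚ) *
          (Nat.choose (m + n + a - b - 1) (n - (r + 1) - b) : ℚ)))
      + ∑ k ∈ Icc ((r : ℤ) + 1) ((m : ℤ) + (n : ℤ)), AQ m n k := by
  obtain ⟨q, hp⟩ : ∃ q, m + n = q + 1 := ⟨m + n - 1, by omega⟩
  set F : ℕ → ℕ → ℚ := fun a b => ((Nat.choose (m + n - a + b - 1) (m - r - a) : ℚ) *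
    (Nat.choose (m + n + a - b - 1) (n - r - b) : ℚ)) with hFdef
  set G : ℤ → ℚ := fun k =>
    (chooseZ q ((m : ℤ) + k - 1) : ℚ) * chooseZ q ((m : ℤ) - k) with hGdef
  -- the row sum (a = 1)
  have hrow : ∑ b ∈ Icc 1 (n - r), F 1 b
      = ∑ k ∈ Icc ((r : ℤ) + 1) ((m : ℤ) + (n : ℤ)),
          (chooseZ q ((m : ℤ) - k) : ℚ) * chooseZ (m + n) ((m : ℤ) + k) := by
    have h := L_s1 m n r hrm hrn
    rw [show m + n - 1 = q by omega] at h
    push_cast at h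
    rw [← h]
    refine Finset.sum_congr rfl ?_
    intro b hb
    rw [hFdef]
    simp only []
    rw [show m + n - 1 + b - 1 = q + b - 1 by omega]
  -- the column sum (b = 1)
  have hcol : ∑ a ∈ Icc 1 (m - r), F a 1
      = ∑ k ∈ Icc ((r : ℤ) + 1) ((m : ℤ) + (n : ℤ)),
          (chooseZ q ((m : ℤ) + k - 1) : ℚ) * chooseZ (m + n) ((m : ℤ) - k) := by
    have h := L_s1 n m r hrn hrm
    rw [Nat.add_comm n m] at h
    rw [show m + n - 1 = q by omega] at h
    push_cast at h
    rw [show (n : ℤ) + (m : ℤ) = (m : ℤ) + (n : ℤ) by ring] at h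
    have h2 : ∑ a ∈ Icc 1 (m - r), F a 1
        = ∑ b ∈ Icc 1 (m - r), (q + b - 1).choose (n - r - 1) * ((m + n + 1 - b - 1).choose (m - r - b) : ℚ) := by
      refine Finset.sum_congr rfl ?_
      intro a ha
      simp only [mem_Icc] at ha
      rw [hFdef]
      simp only []
      rw [show m + n - a + 1 - 1 = m + n + 1 - a - 1 by omega,
        show m + n + a - 1 - 1 = q + a - 1 by omega, show n - r - 1 = n - r - 1 from rfl]
      push_cast
      ring
    rw [h2, h]
    refine Finset.sum_congr rfl ?_
    intro k _
    have e1 : chooseZ q ((n : ℤ) - k) = chooseZ q ((m : ℤ) + k - 1) := by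
      rw [chooseZ_symm q ((n : ℤ) - k)]
      congr 1
      omega
    have e2 : chooseZ (m + n) ((n : ℤ) + k) = chooseZ (m + n) ((m : ℤ) - k) := by
      rw [chooseZ_symm (m + n) ((n : ℤ) + k)]
      congr 1
      push_cast
      ring
    rw [e1, e2]
  -- per-term combination
  have hterm : ∀ k ∈ Icc ((r : ℤ) + 1) ((m : ℤ) + (n : ℤ)),
      ((chooseZ q ((m : ℤ) - k) : ℚ) * chooseZ (m + n) ((m : ℤ) + k)
        + (chooseZ q ((m : ℤ) + k - 1) : ℚ) * chooseZ (m + n) ((m : ℤ) - k))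
      = AQ m n k + (G k - G (k + 1)) := by
    intro k _
    rw [AQ_eq, hGdef]
    simp only []
    have h := term_combo q (m : ℤ) k
    rw [← hp] at h
    rw [h]
    rw [show (m : ℤ) + (k + 1) - 1 = (m : ℤ) + k by ring, show (m : ℤ) - (k + 1) = (m : ℤ) - k - 1 by ring]
  -- telescoping
  have htele : ∑ k ∈ Icc ((r : ℤ) + 1) ((m : ℤ) + (n : ℤ)), (G k - G (k + 1))
      = G ((r : ℤ) + 1) := by
    rw [show ((m : ℤ) + (n : ℤ)) = (r : ℤ) + ((m + n - r : ℕ) : ℤ) by push_cast; omega,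
      sum_tele (r : ℤ) (m + n - r) G]
    have : G ((r : ℤ) + ((m + n - r : ℕ) : ℤ) + 1) = 0 := by
      rw [hGdef]
      simp only []
      rw [chooseZ_neg (show (m : ℤ) - ((r : ℤ) + ((m + n - r : ℕ) : ℤ) + 1) < 0 by push_cast; omega)]
      push_cast
      ring
    rw [this, sub_zero]
  -- the corner cell
  have hF11 : F 1 1 = G ((r : ℤ) + 1) := by
    rw [hFdef, hGdef]
    simp only []
    rw [show m + n - 1 + 1 - 1 = q by omega, show m + n + 1 - 1 - 1 = q by omega]
    have e1 : chooseZ q ((m : ℤ) - ((r : ℤ) + 1)) = q.choose (m - r - 1) := by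
      rw [show (m : ℤ) - ((r : ℤ) + 1) = ((m - r - 1 : ℕ) : ℤ) by push_cast; omega, chooseZ_coe]
    have e2 : chooseZ q ((m : ℤ) + ((r : ℤ) + 1) - 1) = q.choose (n - r - 1) := by
      rw [chooseZ_symm q ((m : ℤ) + ((r : ℤ) + 1) - 1),
        show (q : ℤ) - ((m : ℤ) + ((r : ℤ) + 1) - 1) = ((n - r - 1 : ℕ) : ℤ) by push_cast; omega,
        chooseZ_coe]
    rw [e1, e2]
    ring
  -- the shifted double sum
  have hD : ∑ a ∈ Icc 2 (m - r), ∑ b ∈ Icc 2 (n - r), F a b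
      = ∑ a ∈ Icc 1 (m - (r + 1)), ∑ b ∈ Icc 1 (n - (r + 1)),
          ((Nat.choose (m + n - a + b - 1) (m - (r + 1) - a) : ℚ) *
            (Nat.choose (m + n + a - b - 1) (n - (r + 1) - b) : ℚ)) := by
    rw [Icc_two_shift' (m - r) (m - (r + 1)) (by omega) (fun a => ∑ b ∈ Icc 2 (n - r), F a b)]
    refine Finset.sum_congr rfl ?_
    intro a ha
    simp only [mem_Icc] at ha
    rw [Icc_two_shift' (n - r) (n - (r + 1)) (by omega) (fun b => F (a + 1) b)]
    refine Finset.sum_congr rfl ?_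
    intro b hb
    simp only [mem_Icc] at hb
    rw [hFdef]
    simp only []
    rw [show m + n - (a + 1) + (b + 1) - 1 = m + n - a + b - 1 by omega,
      show m - r - (a + 1) = m - (r + 1) - a by omega,
      show m + n + (a + 1) - (b + 1) - 1 = m + n + a - b - 1 by omega,
      show n - r - (b + 1) = n - (r + 1) - b by omega]
  -- assemble
  have hsplit_outer : ∑ a ∈ Icc 1 (m - r), ∑ b ∈ Icc 1 (n - r), F a b
      = ∑ b ∈ Icc 1 (n - r), F 1 b + ∑ a ∈ Icc 2 (m - r), ∑ b ∈ Icc 1 (n - r), F a b :=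
    Icc_one_split (m - r) (by omega) _
  have hsplit_inner : ∑ a ∈ Icc 2 (m - r), ∑ b ∈ Icc 1 (n - r), F a b
      = ∑ a ∈ Icc 2 (m - r), F a 1 + ∑ a ∈ Icc 2 (m - r), ∑ b ∈ Icc 2 (n - r), F a b := by
    rw [← Finset.sum_add_distrib]
    exact Finset.sum_congr rfl (fun a _ => Icc_one_split (n - r) (by omega) _)
  have hsplit_col : ∑ a ∈ Icc 1 (m - r), F a 1
      = F 1 1 + ∑ a ∈ Icc 2 (m - r), F a 1 :=
    Icc_one_split (m - r) (by omega) _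
  have hcombo : ∑ b ∈ Icc 1 (n - r), F 1 b + ∑ a ∈ Icc 1 (m - r), F a 1
      = ∑ k ∈ Icc ((r : ℤ) + 1) ((m : ℤ) + (n : ℤ)), AQ m n k + G ((r : ℤ) + 1) := by
    rw [hrow, hcol, ← Finset.sum_add_distrib, Finset.sum_congr rfl hterm,
      Finset.sum_add_distrib, htele]
  calc ∑ a ∈ Icc 1 (m - r), ∑ b ∈ Icc 1 (n - r), F a b
      = ∑ b ∈ Icc 1 (n - r), F 1 b + (∑ a ∈ Icc 2 (m - r), F a 1
          + ∑ a ∈ Icc 2 (m - r), ∑ b ∈ Icc 2 (n - r), F a b) := by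
        rw [hsplit_outer, hsplit_inner]
    _ = (∑ b ∈ Icc 1 (n - r), F 1 b + ∑ a ∈ Icc 1 (m - r), F a 1) - F 1 1
          + ∑ a ∈ Icc 2 (m - r), ∑ b ∈ Icc 2 (n - r), F a b := by
        rw [hsplit_col]; ring
    _ = _ := by
        rw [hcombo, hF11, hD]; ring

noncomputable def RHSQ (m n r : ℕ) : ℚ :=
  (m * n : ℚ) / (2 * (m + n)) * (Nat.choose (m + n) m : ℚ) ^ 2 -
    (r : ℚ) / 2 * (Nat.choose (2 * m + 2 * n) (2 * m) : ℚ) +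
    (r : ℚ) / 2 * (Nat.choose (m + n) m : ℚ) ^ 2 +
    ∑ k ∈ Finset.Icc (1 : ℤ) ((r : ℤ) - 1),
      ((r : ℚ) - (k : ℚ)) * (chooseZ (m + n) ((m : ℤ) - k) : ℚ) *
        (chooseZ (m + n) ((n : ℤ) - k) : ℚ)

lemma F1' (m n : ℕ) :
    (Nat.choose (2 * m + 2 * n) (2 * m) : ℚ)
      = (Nat.choose (m + n) m : ℚ) ^ 2 + 2 * ∑ k ∈ Icc (1 : ℤ) ((m : ℤ) + (n : ℤ)), AQ m n k := by
  rw [show 2 * m + 2 * n = 2 * (m + n) by ring]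
  exact F1 m n

lemma hsplit_sum (m n r : ℕ) (hr : 0 < r) (hrp : r ≤ m + n) :
    ∑ k ∈ Icc (1 : ℤ) ((m : ℤ) + (n : ℤ)), AQ m n k
      = (∑ k ∈ Icc (1 : ℤ) (r : ℤ), AQ m n k)
        + ∑ k ∈ Icc ((r : ℤ) + 1) ((m : ℤ) + (n : ℤ)), AQ m n k := by
  rw [show Icc (1 : ℤ) ((m : ℤ) + (n : ℤ))
      = Icc (1 : ℤ) (r : ℤ) ∪ Icc ((r : ℤ) + 1) ((m : ℤ) + (n : ℤ)) by
    ext x; simp only [mem_Icc, mem_union]; push_cast; omega]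
  exact Finset.sum_union (by
    rw [Finset.disjoint_left]
    intro x hx hx'
    simp only [mem_Icc] at hx hx'
    omega)

lemma insert_Icc_top (r : ℕ) (hr : 0 < r) :
    Icc (1 : ℤ) (r : ℤ) = insert (r : ℤ) (Icc (1 : ℤ) ((r : ℤ) - 1)) := by
  ext x
  simp only [mem_Icc, mem_insert]
  omega

lemma notmem_Icc_top (r : ℕ) : (r : ℤ) ∉ Icc (1 : ℤ) ((r : ℤ) - 1) := by
  simp only [mem_Icc]
  omega

lemma L_RHS_step (m n r : ℕ) (hr : 0 < r) (hrp : r ≤ m + n) :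
    RHSQ m n r = RHSQ m n (r + 1)
      + ∑ k ∈ Icc ((r : ℤ) + 1) ((m : ℤ) + (n : ℤ)), AQ m n k := by
  have hWstep : ∑ k ∈ Finset.Icc (1 : ℤ) (((r + 1 : ℕ) : ℤ) - 1),
        (((r + 1 : ℕ) : ℚ) - (k : ℚ)) * (chooseZ (m + n) ((m : ℤ) - k) : ℚ) *
          (chooseZ (m + n) ((n : ℤ) - k) : ℚ)
      = (∑ k ∈ Finset.Icc (1 : ℤ) ((r : ℤ) - 1),
          ((r : ℚ) - (k : ℚ)) * (chooseZ (m + n) ((m : ℤ) - k) : ℚ) *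
            (chooseZ (m + n) ((n : ℤ) - k) : ℚ))
        + ∑ k ∈ Icc (1 : ℤ) (r : ℤ), AQ m n k := by
    rw [show (((r + 1 : ℕ) : ℤ) - 1) = (r : ℤ) by push_cast; ring]
    rw [insert_Icc_top r hr, Finset.sum_insert (notmem_Icc_top r),
      Finset.sum_insert (notmem_Icc_top r)]
    have hterm : ∀ k ∈ Icc (1 : ℤ) ((r : ℤ) - 1),
        (((r + 1 : ℕ) : ℚ) - (k : ℚ)) * (chooseZ (m + n) ((m : ℤ) - k) : ℚ) *
          (chooseZ (m + n) ((n : ℤ) - k) : ℚ)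
        = ((r : ℚ) - (k : ℚ)) * (chooseZ (m + n) ((m : ℤ) - k) : ℚ) *
            (chooseZ (m + n) ((n : ℤ) - k) : ℚ) + AQ m n k := by
      intro k _
      simp only [AQ]
      push_cast
      ring
    rw [Finset.sum_congr rfl hterm, Finset.sum_add_distrib]
    have hr_term : (((r + 1 : ℕ) : ℚ) - ((r : ℤ) : ℚ)) * (chooseZ (m + n) ((m : ℤ) - (r : ℤ)) : ℚ) *
        (chooseZ (m + n) ((n : ℤ) - (r : ℤ)) : ℚ) = AQ m n (r : ℤ) := by
      simp only [AQ]
      push_cast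
      ring
    rw [hr_term]
    ring
  have hF1 := F1' m n
  have hsp := hsplit_sum m n r hr hrp
  simp only [RHSQ]
  push_cast at hWstep ⊢
  linear_combination (1 / 2 : ℚ) * hF1 - hWstep + hsp

lemma L_base (m n r : ℕ) (hm : 0 < m) (hn : 0 < n) (hr : 0 < r) (hbase : m ≤ r ∨ n ≤ r) :
    RHSQ m n r = 0 := by
  set f : ℤ → ℚ := fun k => ((r : ℚ) - (k : ℚ)) * (chooseZ (m + n) ((m : ℤ) - k) : ℚ) *
    (chooseZ (m + n) ((n : ℤ) - k) : ℚ) with hf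
  set M : ℤ := max ((r : ℤ) - 1) ((m : ℤ) + (n : ℤ)) with hM
  have hzero : ∀ k : ℤ, (r : ℤ) ≤ k → f k = 0 := by
    intro k hk
    rw [hf]
    simp only []
    rcases eq_or_lt_of_le hk with heq | hlt
    · rw [← heq]
      push_cast
      ring
    · rcases hbase with h | h
      · rw [chooseZ_neg (show (m : ℤ) - k < 0 by omega)]
        push_cast; ring
      · rw [chooseZ_neg (show (n : ℤ) - k < 0 by omega)]
        push_cast; ring
  have hext : ∑ k ∈ Icc (1 : ℤ) ((r : ℤ) - 1), f k = ∑ k ∈ Icc (1 : ℤ) ((m : ℤ) + (n : ℤ)), f k := by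
    have h1 : ∑ k ∈ Icc (1 : ℤ) ((r : ℤ) - 1), f k = ∑ k ∈ Icc (1 : ℤ) M, f k := by
      refine Finset.sum_subset (Finset.Icc_subset_Icc_right (le_max_left _ _)) ?_
      intro k hk hk'
      simp only [mem_Icc] at hk hk'
      exact hzero k (by omega)
    have h2 : ∑ k ∈ Icc (1 : ℤ) ((m : ℤ) + (n : ℤ)), f k = ∑ k ∈ Icc (1 : ℤ) M, f k := by
      refine Finset.sum_subset (Finset.Icc_subset_Icc_right (le_max_right _ _)) ?_
      intro k hk hk'
      simp only [mem_Icc] at hk hk'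
      rw [hf]
      simp only []
      rw [chooseZ_neg (show (m : ℤ) - k < 0 by omega)]
      push_cast
      ring
    rw [h1, ← h2]
  have hexp : ∑ k ∈ Icc (1 : ℤ) ((m : ℤ) + (n : ℤ)), f k
      = (r : ℚ) * (∑ k ∈ Icc (1 : ℤ) ((m : ℤ) + (n : ℤ)), AQ m n k)
        - ∑ k ∈ Icc (1 : ℤ) ((m : ℤ) + (n : ℤ)), (k : ℚ) * AQ m n k := by
    rw [Finset.mul_sum, ← Finset.sum_sub_distrib]
    refine Finset.sum_congr rfl ?_
    intro k _
    rw [hf]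
    simp only [AQ]
    ring
  have hF1 := F1' m n
  have hF2 := F2 m n hm hn
  simp only [RHSQ]
  rw [show (∑ k ∈ Finset.Icc (1 : ℤ) ((r : ℤ) - 1),
      ((r : ℚ) - (k : ℚ)) * (chooseZ (m + n) ((m : ℤ) - k) : ℚ) *
        (chooseZ (m + n) ((n : ℤ) - k) : ℚ)) = ∑ k ∈ Icc (1 : ℤ) ((r : ℤ) - 1), f k from rfl,
    hext, hexp]
  push_cast
  push_cast at hF2
  linear_combination (-(r : ℚ) / 2) * hF1 - hF2

theorem guo_zeng_corollary6 (m n r : ℕ) (hm : 0 < m) (hn : 0 < n) (hr : 0 < r) :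
    ∑ a ∈ Finset.Icc 1 (m - r), ∑ b ∈ Finset.Icc 1 (n - r),
      ((Nat.choose (m + n - a + b - 1) (m - r - a) : ℚ) *
        (Nat.choose (m + n + a - b - 1) (n - r - b) : ℚ)) =
    (m * n : ℚ) / (2 * (m + n)) * (Nat.choose (m + n) m : ℚ) ^ 2 -
    (r : ℚ) / 2 * (Nat.choose (2 * m + 2 * n) (2 * m) : ℚ) +
    (r : ℚ) / 2 * (Nat.choose (m + n) m : ℚ) ^ 2 +
    ∑ k ∈ Finset.Icc (1 : ℤ) ((r : ℤ) - 1),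
      ((r : ℚ) - (k : ℚ)) * (chooseZ (m + n) ((m : ℤ) - k) : ℚ) *
        (chooseZ (m + n) ((n : ℤ) - k) : ℚ) := by
  have base : ∀ r : ℕ, 0 < r → min m n ≤ r →
      ∑ a ∈ Finset.Icc 1 (m - r), ∑ b ∈ Finset.Icc 1 (n - r),
        ((Nat.choose (m + n - a + b - 1) (m - r - a) : ℚ) *
          (Nat.choose (m + n + a - b - 1) (n - r - b) : ℚ)) = RHSQ m n r := by
    intro r hr hmin
    rw [L_base m n r hm hn hr (by omega)]
    rcases (by omega : m ≤ r ∨ n ≤ r) with h | h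
    · rw [Nat.sub_eq_zero_of_le h]
      simp
    · rw [Nat.sub_eq_zero_of_le h]
      simp
  have key : ∀ d r : ℕ, 0 < r → min m n ≤ r + d →
      ∑ a ∈ Finset.Icc 1 (m - r), ∑ b ∈ Finset.Icc 1 (n - r),
        ((Nat.choose (m + n - a + b - 1) (m - r - a) : ℚ) *
          (Nat.choose (m + n + a - b - 1) (n - r - b) : ℚ)) = RHSQ m n r := by
    intro d
    induction d with
    | zero =>
      intro r hr hmin
      exact base r hr (by omega)
    | succ d ih =>
      intro r hr hmin
      by_cases hc : min m n ≤ r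
      · exact base r hr hc
      · have hrm : r < m := by omega
        have hrn : r < n := by omega
        rw [L_LHS_step m n r hrm hrn, ih (r + 1) (by omega) (by omega),
          L_RHS_step m n r hr (by omega)]
  exact key (min m n) r hr (by omega)
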